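/- Let L_C = n I − 1 1ᵀ be the Laplacian of the unweighted complete graph on n nodes, and let H be a connected weighted graph on the same vertex set whose Laplacian L_H satisfies L_C ⪯ L_H ⪯ (1+ε) L_C for some ε ≥ 0. Then for any distinct leaders s₀, s₁, the French-DeGroot polarization of H satisfies 1/2 ≤ P ≤ (1+ε)²/2. -/

import Mathlib

open Matrix

noncomputable section

/-- Moore–Penrose pseudoinverse conditions. -/
def IsMoorePenrose {V : Type*} [Fintype V] [DecidableEq V]
    (L Lp : Matrix V V ℝ) : Prop :=
  L * Lp * L = L ∧ Lp * L * Lp = Lp ∧ (L * Lp)ᵀ = L * Lp ∧ (Lp * L)ᵀ = Lp * L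

/-- Laplacian of a weighted graph given by weight function `w`. -/
def lapOf {V : Type*} [Fintype V] [DecidableEq V] (w : V → V → ℝ) : Matrix V V ℝ :=
  Matrix.of fun i j => if i = j then ∑ k, w i k else - w i j

/-- The vector `e_u - e_v`. -/
def bvec {V : Type*} [DecidableEq V] (u v : V) : V → ℝ :=
  Pi.single u 1 - Pi.single v 1

/-- The all-ones matrix. -/
def onesM (V : Type*) [Fintype V] : Matrix V V ℝ := Matrix.of fun _ _ => 1

/-- swap a symmetric matrix across a real dot product -/
lemma dot_symm {m : Type*} [Fintype m] {M : Matrix m m ℝ} (h : Mᵀ = M)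
    (u v : m → ℝ) : u ⬝ᵥ M *ᵥ v = (M *ᵥ u) ⬝ᵥ v := by
  rw [dotProduct_mulVec, ← mulVec_transpose, h]

/-- Cauchy–Schwarz for a real PSD matrix. -/
lemma psd_cs {m : Type*} [Fintype m] {M : Matrix m m ℝ} (hsym : Mᵀ = M)
    (hq : ∀ x : m → ℝ, 0 ≤ x ⬝ᵥ M *ᵥ x) (u v : m → ℝ) :
    (u ⬝ᵥ M *ᵥ v) ^ 2 ≤ (u ⬝ᵥ M *ᵥ u) * (v ⬝ᵥ M *ᵥ v) := by
  have hvu : v ⬝ᵥ M *ᵥ u = u ⬝ᵥ M *ᵥ v := by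
    rw [dot_symm hsym v u, dotProduct_comm]
  have key : ∀ t : ℝ, 0 ≤ (v ⬝ᵥ M *ᵥ v) * (t * t) + (2 * (u ⬝ᵥ M *ᵥ v)) * t
      + (u ⬝ᵥ M *ᵥ u) := by
    intro t
    have h := hq (u + t • v)
    simp only [mulVec_add, mulVec_smul, smul_mulVec, dotProduct_add,
      add_dotProduct, smul_dotProduct, dotProduct_smul, smul_eq_mul, hvu] at h
    nlinarith [h]
  have hd := discrim_le_zero key
  rw [discrim] at hd
  nlinarith [hd]

theorem polarization_of_sparsifier {n : ℕ} (hn : 2 ≤ n) (ε : ℝ) (hε : 0 ≤ ε)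
    (LC LH LHp : Matrix (Fin n) (Fin n) ℝ)
    (hLC : LC = (n : ℝ) • (1 : Matrix (Fin n) (Fin n) ℝ) - onesM (Fin n))
    (hlow : (LH - LC).PosSemidef)
    (hhigh : ((1 + ε) • LC - LH).PosSemidef)
    (hMP : IsMoorePenrose LH LHp)
    (s0 s1 : Fin n) (hs : s0 ≠ s1) :
    (1 : ℝ) / 2 ≤
        (bvec s1 s0 ⬝ᵥ (LHp * LHp) *ᵥ bvec s1 s0) /
          (bvec s1 s0 ⬝ᵥ LHp *ᵥ bvec s1 s0) ^ 2 ∧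
      (bvec s1 s0 ⬝ᵥ (LHp * LHp) *ᵥ bvec s1 s0) /
          (bvec s1 s0 ⬝ᵥ LHp *ᵥ bvec s1 s0) ^ 2 ≤ (1 + ε) ^ 2 / 2 := by
  classical
  obtain ⟨hc1, hc2, hc3, hc4⟩ := hMP
  set b : Fin n → ℝ := bvec s1 s0 with hbdef
  set o : Fin n → ℝ := fun _ => 1 with hodef
  have hnR : (0 : ℝ) < n := by positivity
  -- basic vector facts
  have hbb : b ⬝ᵥ b = 2 := by
    simp [hbdef, bvec, dotProduct_sub, sub_dotProduct, dotProduct_single,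
      single_dotProduct, Pi.single_apply, hs, (Ne.symm hs)]
    norm_num
  have hob : o ⬝ᵥ b = 0 := by
    simp [hbdef, hodef, bvec, dotProduct_sub, dotProduct_single]
  have hsum_o : (∑ i, o i) = (n : ℝ) := by simp [hodef]
  -- LC facts
  have hLCmul : ∀ x : Fin n → ℝ, LC *ᵥ x = (n : ℝ) • x - (∑ i, x i) • o := by
    intro x
    rw [hLC]
    funext i
    rw [sub_mulVec, smul_mulVec, one_mulVec]
    have h1 : (onesM (Fin n) *ᵥ x) i = ∑ j, x j := by
      simp [onesM, mulVec, dotProduct]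
    simp only [Pi.sub_apply, Pi.smul_apply, smul_eq_mul, hodef, h1]
    ring
  have hquadLC : ∀ x : Fin n → ℝ, x ⬝ᵥ LC *ᵥ x = (n : ℝ) * (x ⬝ᵥ x) - (∑ i, x i) ^ 2 := by
    intro x
    rw [hLCmul x, dotProduct_sub, dotProduct_smul, dotProduct_smul, smul_eq_mul,
      smul_eq_mul]
    have : x ⬝ᵥ o = ∑ i, x i := by simp [dotProduct, hodef]
    rw [this, sq]
  have hLCq0 : ∀ x : Fin n → ℝ, 0 ≤ x ⬝ᵥ LC *ᵥ x := by
    intro x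
    rw [hquadLC x]
    have hcs := Finset.sum_mul_sq_le_sq_mul_sq Finset.univ o x
    simp only [hodef, one_mul, one_pow, Finset.sum_const, Finset.card_univ,
      Fintype.card_fin, nsmul_eq_mul, mul_one] at hcs
    have : x ⬝ᵥ x = ∑ i, x i ^ 2 := by simp [dotProduct, sq]
    rw [this]
    linarith [hcs]
  -- symmetry facts
  have hLCsym : LCᵀ = LC := by
    rw [hLC]
    have h1 : (onesM (Fin n))ᵀ = onesM (Fin n) := rfl
    rw [transpose_sub, transpose_smul, transpose_one, h1]
  have hstar : ∀ x : Fin n → ℝ, star x = x := fun x => by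
    funext i; simp
  have hlowq : ∀ x : Fin n → ℝ, x ⬝ᵥ LC *ᵥ x ≤ x ⬝ᵥ LH *ᵥ x := by
    intro x
    have h := hlow.dotProduct_mulVec_nonneg x
    rw [hstar, sub_mulVec, dotProduct_sub] at h
    linarith
  have hhighq : ∀ x : Fin n → ℝ, x ⬝ᵥ LH *ᵥ x ≤ (1 + ε) * (x ⬝ᵥ LC *ᵥ x) := by
    intro x
    have h := hhigh.dotProduct_mulVec_nonneg x
    rw [hstar, sub_mulVec, smul_mulVec, dotProduct_sub, dotProduct_smul,
      smul_eq_mul] at h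
    linarith
  have hLHsym : LHᵀ = LH := by
    have h := hlow.1
    have h2 : (LH - LC)ᵀ = LH - LC := by
      exact (by simpa [Matrix.conjTranspose_eq_transpose_of_trivial] using h : (LH - LC).IsSymm)
    rw [transpose_sub, hLCsym] at h2
    have := congrArg (· + LC) h2
    simpa using this
  have hLHq0 : ∀ x : Fin n → ℝ, 0 ≤ x ⬝ᵥ LH *ᵥ x :=
    fun x => le_trans (hLCq0 x) (hlowq x)
  -- kernel lemmas
  have hLCpsd : LC.PosSemidef := by
    refine PosSemidef.of_dotProduct_mulVec_nonneg ?_ ?_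
    · have h' : LC.IsSymm := hLCsym
      simpa [Matrix.conjTranspose_eq_transpose_of_trivial] using h'
    · intro x; rw [hstar]; exact hLCq0 x
  have hLCker : ∀ x : Fin n → ℝ, x ⬝ᵥ LC *ᵥ x = 0 → LC *ᵥ x = 0 := by
    intro x hx
    exact (hLCpsd.dotProduct_mulVec_zero_iff x).mp (by rw [hstar]; exact hx)
  have hLHpsd : LH.PosSemidef := by
    refine PosSemidef.of_dotProduct_mulVec_nonneg ?_ ?_
    · have h' : LH.IsSymm := hLHsym
      simpa [Matrix.conjTranspose_eq_transpose_of_trivial] using h'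
    · intro x; rw [hstar]; exact hLHq0 x
  have hLHker : ∀ x : Fin n → ℝ, x ⬝ᵥ LH *ᵥ x = 0 → LH *ᵥ x = 0 := by
    intro x hx
    exact (hLHpsd.dotProduct_mulVec_zero_iff x).mp (by rw [hstar]; exact hx)
  -- LH kills the all-ones vector
  have hLCo : LC *ᵥ o = 0 := by
    rw [hLCmul o, hsum_o]
    simp
  have hLHo : LH *ᵥ o = 0 := by
    apply hLHker
    have h1 : o ⬝ᵥ LC *ᵥ o = 0 := by rw [hLCo]; simp
    have h2 := hlowq o
    have h3 := hhighq o
    rw [h1] at h2 h3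
    simp at h3
    linarith
  -- kernel of LH is the constants
  have hker : ∀ x : Fin n → ℝ, LH *ᵥ x = 0 → ∃ c : ℝ, x = c • o := by
    intro x hx
    have h0 : x ⬝ᵥ LH *ᵥ x = 0 := by rw [hx]; simp
    have h1 : x ⬝ᵥ LC *ᵥ x = 0 :=
      le_antisymm (by rw [← h0]; exact hlowq x) (hLCq0 x)
    have h2 : LC *ᵥ x = 0 := hLCker x h1
    rw [hLCmul x] at h2
    refine ⟨(∑ i, x i) / n, ?_⟩
    funext i
    have h3 := congrFun h2 i
    simp only [Pi.sub_apply, Pi.smul_apply, smul_eq_mul, Pi.zero_apply, hodef] at h3 ⊢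
    field_simp
    linarith
  -- Moore-Penrose algebra
  have e0 : LH * LHpᵀ = LHp * LH := by
    calc LH * LHpᵀ = LHᵀ * LHpᵀ := by rw [hLHsym]
    _ = (LHp * LH)ᵀ := (transpose_mul _ _).symm
    _ = LHp * LH := hc4
  have e1 : LHpᵀ * LH = LH * LHp := by
    calc LHpᵀ * LH = LHpᵀ * LHᵀ := by rw [hLHsym]
    _ = (LH * LHp)ᵀ := (transpose_mul _ _).symm
    _ = LH * LHp := hc3
  have comm : LH * LHp = LHp * LH := by
    calc LH * LHp = LHpᵀ * LH := e1.symm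
    _ = LHpᵀ * (LH * LHp * LH) := by rw [hc1]
    _ = (LHpᵀ * LH) * (LHp * LH) := by simp only [mul_assoc]
    _ = (LH * LHp) * (LHp * LH) := by rw [e1]
    _ = (LH * LHp) * (LH * LHpᵀ) := by rw [e0]
    _ = (LH * LHp * LH) * LHpᵀ := by simp only [mul_assoc]
    _ = LH * LHpᵀ := by rw [hc1]
    _ = LHp * LH := e0
  have hLpsym : LHpᵀ = LHp := by
    have hA : LHpᵀ = LH * (LHp * LHp) := by
      calc LHpᵀ = (LHp * LH * LHp)ᵀ := by rw [hc2]
      _ = LHpᵀ * (LHp * LH)ᵀ := by rw [transpose_mul]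
      _ = LHpᵀ * (LHp * LH) := by rw [hc4]
      _ = LHpᵀ * (LH * LHp) := by rw [← comm]
      _ = (LHpᵀ * LH) * LHp := by rw [← mul_assoc]
      _ = (LH * LHp) * LHp := by rw [e1]
      _ = LH * (LHp * LHp) := by rw [mul_assoc]
    have hB : LHp = LH * (LHp * LHp) := by
      calc LHp = LHp * LH * LHp := hc2.symm
      _ = (LH * LHp) * LHp := by rw [comm]
      _ = LH * (LHp * LHp) := by rw [mul_assoc]
    rw [hA]; exact hB.symm
  -- the vector y
  set y : Fin n → ℝ := LHp *ᵥ b with hydef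
  have hoy : o ⬝ᵥ y = 0 := by
    have hyy : (LHp * LH) *ᵥ y = y := by
      rw [hydef, mulVec_mulVec, hc2]
    calc o ⬝ᵥ y = o ⬝ᵥ ((LHp * LH) *ᵥ y) := by rw [hyy]
    _ = ((LHp * LH) *ᵥ o) ⬝ᵥ y := dot_symm hc4 o y
    _ = (LHp *ᵥ (LH *ᵥ o)) ⬝ᵥ y := by rw [mulVec_mulVec]
    _ = 0 := by rw [hLHo]; simp
  obtain ⟨c, hcy⟩ : ∃ c : ℝ, LH *ᵥ y - b = c • o := by
    apply hker
    rw [mulVec_sub, hydef, mulVec_mulVec, mulVec_mulVec]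
    have h : LH * LH * LHp = LH := by rw [mul_assoc, comm, ← mul_assoc, hc1]
    rw [h, sub_self]
  have hLy : LH *ᵥ y = b + c • o := by
    rw [← hcy]; abel
  -- quadratic identities
  have hbLy : b ⬝ᵥ LH *ᵥ y = 2 := by
    rw [hLy, dotProduct_add, dotProduct_smul, hbb, dotProduct_comm b o, hob]
    simp
  have hyLy : y ⬝ᵥ LH *ᵥ y = b ⬝ᵥ y := by
    rw [hLy, dotProduct_add, dotProduct_smul, dotProduct_comm y o, hoy,
      dotProduct_comm y b]
    simp
  set D : ℝ := b ⬝ᵥ y with hDdef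
  set N : ℝ := y ⬝ᵥ y with hNdef
  have hnum : b ⬝ᵥ (LHp * LHp) *ᵥ b = N := by
    rw [← mulVec_mulVec, dot_symm hLpsym b (LHp *ᵥ b), ← hydef, hNdef]
  -- main inequalities
  have hsum_y : (∑ i, y i) = 0 := by
    rw [← hoy]; simp [dotProduct, hodef]
  have hDN : (n : ℝ) * N ≤ D := by
    have h := hlowq y
    rw [hquadLC y, hsum_y, hyLy] at h
    simpa [hNdef] using h
  have hbLb : b ⬝ᵥ LH *ᵥ b ≤ (1 + ε) * (2 * n) := by
    have h := hhighq b
    rw [hquadLC b, hbb] at h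
    have hsb : (∑ i, b i) = 0 := by rw [← hob]; simp [dotProduct, hodef]
    rw [hsb] at h
    calc b ⬝ᵥ LH *ᵥ b ≤ (1 + ε) * ((n : ℝ) * 2 - 0 ^ 2) := h
    _ = (1 + ε) * (2 * n) := by ring
  have hcs4 : 4 ≤ ((1 + ε) * (2 * n)) * D := by
    have h := psd_cs hLHsym hLHq0 b y
    rw [hbLy, hyLy] at h
    have hDnn : 0 ≤ D := by
      rw [← hyLy]; exact hLHq0 y
    calc (4 : ℝ) = 2 ^ 2 := by norm_num
    _ ≤ b ⬝ᵥ LH *ᵥ b * D := h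
    _ ≤ (1 + ε) * (2 * n) * D := mul_le_mul_of_nonneg_right hbLb hDnn
  have hDpos : 0 < D := by
    by_contra hD
    push_neg at hD
    have hK : (0 : ℝ) < (1 + ε) * (2 * n) := by positivity
    nlinarith [mul_nonpos_of_nonneg_of_nonpos hK.le hD, hcs4]
  have hcs2 : D ^ 2 ≤ 2 * N := by
    have hcs := Finset.sum_mul_sq_le_sq_mul_sq Finset.univ b y
    have h1 : D = ∑ i, b i * y i := by rw [hDdef]; rfl
    have h2 : (∑ i, b i ^ 2) = 2 := by rw [← hbb]; simp [dotProduct, sq]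
    have h3 : (∑ i, y i ^ 2) = N := by rw [hNdef]; simp [dotProduct, sq]
    rw [h1]
    rw [h2, h3] at hcs
    exact hcs
  -- conclude
  rw [hnum]
  have hn2 : (2 : ℝ) ≤ n := by exact_mod_cast hn
  have hNnn : 0 ≤ N := by
    rw [hNdef]
    exact Finset.sum_nonneg fun i _ => mul_self_nonneg (y i)
  constructor
  · rw [le_div_iff₀ (by positivity)]
    linarith
  · rw [div_le_div_iff₀ (by positivity) (by norm_num)]
    have hεD : 0 ≤ ε * D := mul_nonneg hε hDpos.le
    have key : 4 * ((1 + ε) * D) ≤ ((1 + ε) * (2 * n) * D) * ((1 + ε) * D) := by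
      apply mul_le_mul_of_nonneg_right hcs4
      have : (0 : ℝ) ≤ 1 + ε := by linarith
      exact mul_nonneg this hDpos.le
    nlinarith [hDN, hcs4, hDpos, hnR, hε, hn2, hNnn, key, hεD]
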